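/- Let E be a finite-dimensional real inner product space and let X and Y be nonempty compact convex subsets of E. Then for every nonempty compact convex W ⊆ E with X ⊆ Y + W, there exists a nonempty compact convex Z ⊆ W such that X ⊆ Y + Z and Z is inclusion-minimal among nonempty compact convex sets Z' with X ⊆ Y + Z' (i.e., Z ∈ X ÷ Y). In particular, the collection X ÷ Y is nonempty. -/
import Mathlib


open Pointwise
open scoped RealInnerProductSpace

/-- The support function of a set `A ⊆ E`: `h_A(p) = sup_{a ∈ A} ⟪p, a⟫`. -/
noncomputable def supportFn {E : Type*} [NormedAddCommGroup E] [InnerProductSpace ℝ E]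
    (A : Set E) (p : E) : ℝ :=
  sSup ((fun a => ⟪p, a⟫) '' A)

/-- `Z` is a member of the generalized Minkowski–Pontryagin difference `X ÷ Y`:
`Z` is nonempty, compact, convex, `X ⊆ Y + Z`, and no nonempty compact convex
proper subset `Z' ⊊ Z` satisfies `X ⊆ Y + Z'`. -/
def MemGMPDiff {E : Type*} [NormedAddCommGroup E] [InnerProductSpace ℝ E]
    (X Y Z : Set E) : Prop :=
  Z.Nonempty ∧ IsCompact Z ∧ Convex ℝ Z ∧ X ⊆ Y + Z ∧
    ∀ Z' : Set E, Z'.Nonempty → IsCompact Z' → Convex ℝ Z' → Z' ⊂ Z → ¬ X ⊆ Y + Z'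

theorem gmpDiff_nonempty_and_minimal_below
    {E : Type*} [NormedAddCommGroup E] [InnerProductSpace ℝ E] [FiniteDimensional ℝ E]
    (X Y : Set E)
    (hXne : X.Nonempty) (hXc : IsCompact X) (hXconv : Convex ℝ X)
    (hYne : Y.Nonempty) (hYc : IsCompact Y) (hYconv : Convex ℝ Y) :
    ∀ W : Set E, W.Nonempty → IsCompact W → Convex ℝ W → X ⊆ Y + W →
      ∃ Z : Set E, Z ⊆ W ∧ MemGMPDiff X Y Z := by
  intro W hWne hWc hWconv hXW
  set S : Set (Set E) := {Z | Z ⊆ W ∧ Z.Nonempty ∧ IsCompact Z ∧ Convex ℝ Z ∧ X ⊆ Y + Z}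
    with hS
  have hWS : W ∈ S := ⟨subset_rfl, hWne, hWc, hWconv, hXW⟩
  have H : ∀ c ⊆ S, IsChain (· ⊆ ·) c → c.Nonempty → ∃ lb ∈ S, ∀ s ∈ c, lb ⊆ s := by
    intro c hcS hc hcne
    haveI : Nonempty c := hcne.to_subtype
    obtain ⟨Z₀, hZ₀⟩ := hcne
    have hsub : X ⊆ Y + ⋂₀ c := by
      intro x hx
      set K : c → Set E := fun Z => Z.1 ∩ ((fun y => x - y) '' Y) with hK
      have hdir : Directed (· ⊇ ·) K := by
        intro Z₁ Z₂
        rcases hc.total Z₁.2 Z₂.2 with h | h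
        · exact ⟨Z₁, subset_rfl, Set.inter_subset_inter_left _ h⟩
        · exact ⟨Z₂, Set.inter_subset_inter_left _ h, subset_rfl⟩
      have hne : ∀ Z : c, (K Z).Nonempty := by
        intro Z
        obtain ⟨_, _, _, _, hXYZ⟩ := hcS Z.2
        obtain ⟨y, hy, z, hz, hyz⟩ := Set.mem_add.mp (hXYZ hx)
        exact ⟨z, hz, y, hy, show x - y = z by rw [← hyz, add_sub_cancel_left]⟩
      have hcpt : ∀ Z : c, IsCompact (K Z) := fun Z =>
        ((hcS Z.2).2.2.1).inter_right
          ((hYc.image (continuous_const.sub continuous_id)).isClosed)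
      have hcl : ∀ Z : c, IsClosed (K Z) := fun Z => (hcpt Z).isClosed
      obtain ⟨z, hz⟩ :=
        IsCompact.nonempty_iInter_of_directed_nonempty_isCompact_isClosed K hdir hne hcpt hcl
      have hz' := Set.mem_iInter.mp hz
      obtain ⟨_, y, hy, hxy⟩ := hz' ⟨Z₀, hZ₀⟩
      refine Set.mem_add.mpr ⟨y, hy, z, ?_, ?_⟩
      · exact Set.mem_sInter.mpr fun Z hZ => (hz' ⟨Z, hZ⟩).1
      · simp only [← hxy]; exact add_sub_cancel y x
    have hne' : (⋂₀ c).Nonempty := by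
      obtain ⟨x, hx⟩ := hXne
      obtain ⟨y, hy, z, hz, _⟩ := Set.mem_add.mp (hsub hx)
      exact ⟨z, hz⟩
    refine ⟨⋂₀ c, ⟨(Set.sInter_subset_of_mem hZ₀).trans (hcS hZ₀).1, hne',
      IsCompact.of_isClosed_subset (hcS hZ₀).2.2.1
        (isClosed_sInter fun Z hZ => ((hcS hZ).2.2.1).isClosed)
        (Set.sInter_subset_of_mem hZ₀),
      convex_sInter fun Z hZ => (hcS hZ).2.2.2.1, hsub⟩,
      fun s hs => Set.sInter_subset_of_mem hs⟩
  obtain ⟨m, hmW, hmin⟩ := zorn_superset_nonempty S H W hWS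
  obtain ⟨_, hmne, hmc, hmconv, hmXY⟩ := hmin.prop
  refine ⟨m, hmW, hmne, hmc, hmconv, hmXY, ?_⟩
  intro Z' hZ'ne hZ'c hZ'conv hZ'sub hXYZ'
  have : Z' ∈ S := ⟨hZ'sub.subset.trans hmW, hZ'ne, hZ'c, hZ'conv, hXYZ'⟩
  exact hZ'sub.not_subset (hmin.2 this hZ'sub.subset)
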